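/- Let B ⊆ S be a target set in a finite DTMC and let D be the set of states that can reach B (the backward-reachable set of B). Then the system of linear equations x(s) = Σ_{t ∈ D} P(s,t)·x(t) + Σ_{u ∈ B} P(s,u) for s ∈ D, together with x(u) = 1 for u ∈ B, has a unique solution, and that solution equals the reachability probabilities Pr[◇B | s]. -/
import Mathlib


noncomputable section
attribute [local instance] Classical.propDecidable

variable {S : Type*}

/-- Probability of a finite path: product of transition probabilities. -/
def pathProb (P : S → S → ℝ) : List S → ℝ
  | [] => 1
  | [_] => 1
  | a :: b :: r => P a b * pathProb P (b :: r)

/-- A danger path from `s` into `B`: nonempty, starts at `s`, ends in `B`,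
all states except the last outside `B`. -/
def IsDangerPath (T : S → S → Prop) (B : Set S) (s : S) (l : List S) : Prop :=
  l.Chain' T ∧ ∃ h : l ≠ [], l.head h = s ∧ l.getLast h ∈ B ∧ ∀ x ∈ l.dropLast, x ∉ B

/-- Reachability in at most `n` steps. -/
def ReachN (T : S → S → Prop) : ℕ → S → S → Prop
  | 0, s, u => s = u
  | n + 1, s, u => s = u ∨ ∃ t, T s t ∧ ReachN T n t u

/-- States that can reach `X` within `j` steps. -/
def PreN (T : S → S → Prop) (X : Set S) (j : ℕ) : Set S :=
  {s | ∃ b ∈ X, ReachN T j s b}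

/-- States reachable from `I` within `i` steps. -/
def PostN (T : S → S → Prop) (I : Set S) (i : ℕ) : Set S :=
  {s | ∃ a ∈ I, ReachN T i a s}

/-- States that can reach `X` (backward reachable set). -/
def PreStar (T : S → S → Prop) (X : Set S) : Set S :=
  {s | ∃ b ∈ X, Relation.ReflTransGen T s b}

/-- States reachable from `I`. -/
def PostStar (T : S → S → Prop) (I : Set S) : Set S :=
  {s | ∃ a ∈ I, Relation.ReflTransGen T a s}

/-- The reachability (hitting) probability `Pr[◇B | s]`, characterized as the least
nonnegative solution of the standard fixed-point equations. -/
def hitProb [Fintype S] (P : S → S → ℝ) (B : Set S) (s : S) : ℝ :=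
  sInf {r : ℝ | ∃ x : S → ℝ, (∀ t, 0 ≤ x t) ∧ (∀ t ∈ B, x t = 1) ∧
    (∀ t ∉ B, x t = ∑ u, P t u * x u) ∧ r = x s}

/-- Solution of the linear system over `D = Pre*(B) \ B`. -/
def IsSol [Fintype S] (P : S → S → ℝ) (B D : Set S) (x : S → ℝ) : Prop :=
  (∀ u ∈ B, x u = 1) ∧
  ∀ s ∈ D, x s = (∑ t, if t ∈ D then P s t * x t else 0) + ∑ u, if u ∈ B then P s u else 0

namespace Stmt2Aux

variable [Fintype S]

def fseq (P : S → S → ℝ) (B : Set S) : ℕ → S → ℝ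
  | 0 => fun s => if s ∈ B then 1 else 0
  | k+1 => fun s => if s ∈ B then 1 else ∑ u, P s u * fseq P B k u

variable {P : S → S → ℝ} {B : Set S}

lemma fseq_nonneg (hnn : ∀ s t, 0 ≤ P s t) : ∀ k s, 0 ≤ fseq P B k s := by
  intro k
  induction k with
  | zero => intro s; simp only [fseq]; split <;> norm_num
  | succ k ih =>
    intro s; simp only [fseq]; split
    · norm_num
    · exact Finset.sum_nonneg fun u _ => mul_nonneg (hnn s u) (ih u)

lemma fseq_le_one (hnn : ∀ s t, 0 ≤ P s t) (hrow : ∀ s, ∑ t, P s t = 1) :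
    ∀ k s, fseq P B k s ≤ 1 := by
  intro k
  induction k with
  | zero => intro s; simp only [fseq]; split <;> norm_num
  | succ k ih =>
    intro s; simp only [fseq]; split
    · exact le_refl 1
    · calc ∑ u, P s u * fseq P B k u ≤ ∑ u, P s u * 1 :=
            Finset.sum_le_sum fun u _ => mul_le_mul_of_nonneg_left (ih u) (hnn s u)
        _ = 1 := by simp [hrow s]

lemma fseq_mono (hnn : ∀ s t, 0 ≤ P s t) :
    ∀ k s, fseq P B k s ≤ fseq P B (k+1) s := by
  intro k
  induction k with
  | zero =>
    intro s; simp only [fseq]; split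
    · exact le_refl 1
    · exact Finset.sum_nonneg fun u _ => mul_nonneg (hnn s u) (fseq_nonneg hnn 0 u)
  | succ k ih =>
    intro s; simp only [fseq]; split
    · exact le_refl 1
    · exact Finset.sum_le_sum fun u _ => mul_le_mul_of_nonneg_left (ih u) (hnn s u)

lemma fseq_mono' (hnn : ∀ s t, 0 ≤ P s t) {k l : ℕ} (h : k ≤ l) (s : S) :
    fseq P B k s ≤ fseq P B l s := by
  induction l with
  | zero => exact Nat.le_zero.mp h ▸ le_refl _
  | succ l ih =>
    rcases Nat.lt_or_ge k (l+1) with h' | h'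
    · exact le_trans (ih (Nat.lt_succ_iff.mp h')) (fseq_mono hnn l s)
    · have : k = l + 1 := le_antisymm h h'
      exact this ▸ le_refl _

def fsup (P : S → S → ℝ) (B : Set S) (s : S) : ℝ := ⨆ k, fseq P B k s

lemma fseq_bdd (hnn : ∀ s t, 0 ≤ P s t) (hrow : ∀ s, ∑ t, P s t = 1) (s : S) :
    BddAbove (Set.range fun k => fseq P B k s) :=
  ⟨1, by rintro r ⟨k, rfl⟩; exact fseq_le_one hnn hrow k s⟩

lemma fseq_le_fsup (hnn : ∀ s t, 0 ≤ P s t) (hrow : ∀ s, ∑ t, P s t = 1) (k : ℕ) (s : S) :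
    fseq P B k s ≤ fsup P B s :=
  le_ciSup (fseq_bdd hnn hrow s) k

lemma fsup_tendsto (hnn : ∀ s t, 0 ≤ P s t) (hrow : ∀ s, ∑ t, P s t = 1) (s : S) :
    Filter.Tendsto (fun k => fseq P B k s) Filter.atTop (nhds (fsup P B s)) :=
  tendsto_atTop_ciSup (fun _ _ h => fseq_mono' hnn h s) (fseq_bdd hnn hrow s)

lemma fsup_nonneg (hnn : ∀ s t, 0 ≤ P s t) (hrow : ∀ s, ∑ t, P s t = 1) (s : S) :
    0 ≤ fsup P B s :=
  le_trans (fseq_nonneg hnn 0 s) (fseq_le_fsup hnn hrow 0 s)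

lemma fsup_mem (s : S) (hs : s ∈ B) : fsup P B s = 1 := by
  have h : ∀ k, fseq P B k s = 1 := by
    intro k; cases k <;> simp only [fseq, if_pos hs]
  simp only [fsup, h, ciSup_const]

lemma fsup_fix (hnn : ∀ s t, 0 ≤ P s t) (hrow : ∀ s, ∑ t, P s t = 1)
    (s : S) (hs : s ∉ B) : fsup P B s = ∑ u, P s u * fsup P B u := by
  have h1 : Filter.Tendsto (fun k => fseq P B (k+1) s) Filter.atTop (nhds (fsup P B s)) :=
    (Filter.tendsto_add_atTop_iff_nat 1).mpr (fsup_tendsto hnn hrow s)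
  have h2 : Filter.Tendsto (fun k => ∑ u, P s u * fseq P B k u) Filter.atTop
      (nhds (∑ u, P s u * fsup P B u)) :=
    tendsto_finset_sum _ fun u _ => (fsup_tendsto hnn hrow u).const_mul _
  have he : (fun k => fseq P B (k+1) s) = fun k => ∑ u, P s u * fseq P B k u := by
    funext k; simp only [fseq, if_neg hs]
  rw [he] at h1
  exact tendsto_nhds_unique h1 h2

lemma fseq_le_sol (hnn : ∀ s t, 0 ≤ P s t) (x : S → ℝ) (hx0 : ∀ t, 0 ≤ x t)
    (hxB : ∀ t ∈ B, x t = 1) (hxf : ∀ t ∉ B, x t = ∑ u, P t u * x u) :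
    ∀ k s, fseq P B k s ≤ x s := by
  intro k
  induction k with
  | zero =>
    intro s; simp only [fseq]; split
    · exact le_of_eq (hxB s ‹_›).symm
    · exact hx0 s
  | succ k ih =>
    intro s; simp only [fseq]; split
    · exact le_of_eq (hxB s ‹_›).symm
    · rw [hxf s ‹_›]
      exact Finset.sum_le_sum fun u _ => mul_le_mul_of_nonneg_left (ih u) (hnn s u)

lemma hitProb_eq_fsup (hnn : ∀ s t, 0 ≤ P s t) (hrow : ∀ s, ∑ t, P s t = 1) (s : S) :
    hitProb P B s = fsup P B s := by
  have hmem : fsup P B s ∈ {r : ℝ | ∃ x : S → ℝ, (∀ t, 0 ≤ x t) ∧ (∀ t ∈ B, x t = 1) ∧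
      (∀ t ∉ B, x t = ∑ u, P t u * x u) ∧ r = x s} :=
    ⟨fsup P B, fsup_nonneg hnn hrow, fun t ht => fsup_mem t ht,
      fun t ht => fsup_fix hnn hrow t ht, rfl⟩
  apply le_antisymm
  · apply csInf_le
    · refine ⟨0, ?_⟩
      rintro r ⟨x, hx0, _, _, rfl⟩
      exact hx0 s
    · exact hmem
  · apply le_csInf ⟨_, hmem⟩
    rintro r ⟨x, hx0, hxB, hxf, rfl⟩
    exact ciSup_le fun k => fseq_le_sol hnn x hx0 hxB hxf k s

lemma fseq_zero_off (hnn : ∀ s t, 0 ≤ P s t) :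
    ∀ k s, s ∉ PreStar (fun a b => 0 < P a b) B → s ∉ B → fseq P B k s = 0 := by
  intro k
  induction k with
  | zero => intro s _ hsB; simp [fseq, hsB]
  | succ k ih =>
    intro s hsP hsB
    simp only [fseq, if_neg hsB]
    apply Finset.sum_eq_zero
    intro u _
    rcases lt_or_eq_of_le (hnn s u) with hpos | hz
    · have huB : u ∉ B := fun huB => hsP ⟨u, huB, Relation.ReflTransGen.single hpos⟩
      have huP : u ∉ PreStar (fun a b => 0 < P a b) B := by
        rintro ⟨b, hb, hr⟩
        exact hsP ⟨b, hb, hr.head hpos⟩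
      rw [ih u huP huB, mul_zero]
    · rw [← hz, zero_mul]

lemma fsup_zero_off (hnn : ∀ s t, 0 ≤ P s t)
    (s : S) (hsP : s ∉ PreStar (fun a b => 0 < P a b) B) (hsB : s ∉ B) :
    fsup P B s = 0 := by
  have h : ∀ k, fseq P B k s = 0 := fun k => fseq_zero_off hnn k s hsP hsB
  simp only [fsup, h, ciSup_const]

lemma fseq_pos (hnn : ∀ s t, 0 ≤ P s t)
    {s : S} (hs : s ∈ PreStar (fun a b => 0 < P a b) B) :
    ∃ k, 0 < fseq P B k s := by
  obtain ⟨b, hb, hr⟩ := hs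
  induction hr using Relation.ReflTransGen.head_induction_on with
  | refl => exact ⟨0, by simp [fseq, hb]⟩
  | head hst _ ih =>
    rename_i a c _
    obtain ⟨k, hk⟩ := ih
    by_cases haB : a ∈ B
    · exact ⟨0, by simp [fseq, haB]⟩
    · refine ⟨k + 1, ?_⟩
      simp only [fseq, if_neg haB]
      have h1 : 0 < P a c * fseq P B k c := mul_pos hst hk
      have h2 : ∀ u ∈ Finset.univ, 0 ≤ P a u * fseq P B k u :=
        fun u _ => mul_nonneg (hnn a u) (fseq_nonneg hnn k u)
      calc (0:ℝ) < P a c * fseq P B k c := h1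
        _ ≤ ∑ u, P a u * fseq P B k u :=
          Finset.single_le_sum h2 (Finset.mem_univ c)

end Stmt2Aux
/-- the linear system over the backward-reachable set has a unique
solution, which equals the reachability probabilities. -/
theorem stmt2 [Fintype S] (P : S → S → ℝ)
    (hnn : ∀ s t, 0 ≤ P s t) (hrow : ∀ s, ∑ t, P s t = 1) (B : Set S) :
    let T : S → S → Prop := fun a b => 0 < P a b
    let D : Set S := PreStar T B \ B
    (∃ x : S → ℝ, IsSol P B D x) ∧
    (∀ x y : S → ℝ, IsSol P B D x → IsSol P B D y → ∀ s ∈ D ∪ B, x s = y s) ∧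
    (∀ x : S → ℝ, IsSol P B D x → ∀ s ∈ D ∪ B, x s = hitProb P B s) := by
  intro T D
  have hsol : IsSol P B D (Stmt2Aux.fsup P B) := by
    constructor
    · exact fun u hu => Stmt2Aux.fsup_mem u hu
    · intro s hs
      rw [Stmt2Aux.fsup_fix hnn hrow s hs.2, ← Finset.sum_add_distrib]
      apply Finset.sum_congr rfl
      intro u _
      by_cases huD : u ∈ D
      · rw [if_pos huD, if_neg huD.2, add_zero]
      · by_cases huB : u ∈ B
        · rw [if_neg huD, if_pos huB, Stmt2Aux.fsup_mem u huB, mul_one, zero_add]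
        · have huP : u ∉ PreStar T B := fun h => huD ⟨h, huB⟩
          rw [if_neg huD, if_neg huB, Stmt2Aux.fsup_zero_off hnn u huP huB]
          simp
  have huniq : ∀ x y : S → ℝ, IsSol P B D x → IsSol P B D y → ∀ s ∈ D ∪ B, x s = y s := by
    intro x y hx hy
    set d : S → ℝ := fun s => x s - y s with hd
    have hdD : ∀ s ∈ D, d s = ∑ t, if t ∈ D then P s t * d t else 0 := by
      intro s hs
      simp only [hd]
      rw [hx.2 s hs, hy.2 s hs, add_sub_add_right_eq_sub, ← Finset.sum_sub_distrib]
      apply Finset.sum_congr rfl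
      intro t _
      by_cases htD : t ∈ D <;> simp [htD] <;> ring
    intro s hs
    rcases hs with hsD | hsB
    swap
    · rw [hx.1 s hsB, hy.1 s hsB]
    have hfin : D.Finite := Set.toFinite D
    have hDne : D.Nonempty := ⟨s, hsD⟩
    have hFne : hfin.toFinset.Nonempty := by
      rw [Set.Finite.toFinset_nonempty]; exact hDne
    set M := hfin.toFinset.sup' hFne (fun t => |d t|) with hM
    have hMle : ∀ t ∈ D, |d t| ≤ M := fun t ht =>
      Finset.le_sup' (f := fun t => |d t|) (hfin.mem_toFinset.mpr ht)
    have hM0 : 0 ≤ M := le_trans (abs_nonneg _) (hMle s hsD)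
    have key : ∀ k, ∀ t ∈ D, |d t| ≤ M * (1 - Stmt2Aux.fseq P B k t) := by
      intro k
      induction k with
      | zero =>
        intro t ht
        have h0 : Stmt2Aux.fseq P B 0 t = 0 := by
          simp [Stmt2Aux.fseq, ht.2]
        rw [h0]; simpa using hMle t ht
      | succ k ih =>
        intro t ht
        rw [hdD t ht]
        have hb : ∀ u ∈ Finset.univ, |if u ∈ D then P t u * d u else 0| ≤
            P t u * (M * (1 - Stmt2Aux.fseq P B k u)) := by
          intro u _
          by_cases huD : u ∈ D
          · rw [if_pos huD, abs_mul, abs_of_nonneg (hnn t u)]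
            exact mul_le_mul_of_nonneg_left (ih u huD) (hnn t u)
          · rw [if_neg huD, abs_zero]
            have h1 : Stmt2Aux.fseq P B k u ≤ 1 := Stmt2Aux.fseq_le_one hnn hrow k u
            exact mul_nonneg (hnn t u) (mul_nonneg hM0 (by linarith))
        calc |∑ u, if u ∈ D then P t u * d u else 0|
            ≤ ∑ u, |if u ∈ D then P t u * d u else 0| := Finset.abs_sum_le_sum_abs _ _
          _ ≤ ∑ u, P t u * (M * (1 - Stmt2Aux.fseq P B k u)) := Finset.sum_le_sum hb
          _ = M * (1 - Stmt2Aux.fseq P B (k+1) t) := by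
              have he : ∀ u ∈ Finset.univ, P t u * (M * (1 - Stmt2Aux.fseq P B k u)) =
                  M * P t u - M * (P t u * Stmt2Aux.fseq P B k u) := fun u _ => by ring
              rw [Finset.sum_congr rfl he, Finset.sum_sub_distrib, ← Finset.mul_sum,
                ← Finset.mul_sum, hrow t]
              have ht' : Stmt2Aux.fseq P B (k+1) t = ∑ u, P t u * Stmt2Aux.fseq P B k u := by
                simp only [Stmt2Aux.fseq, if_neg ht.2]
              rw [ht']; ring
    obtain ⟨t0, ht0F, ht0M⟩ := Finset.exists_mem_eq_sup' hFne (fun t => |d t|)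
    have ht0D : t0 ∈ D := hfin.mem_toFinset.mp ht0F
    obtain ⟨k, hk⟩ := Stmt2Aux.fseq_pos hnn ht0D.1
    have h1 : M ≤ M * (1 - Stmt2Aux.fseq P B k t0) :=
      calc M = |d t0| := hM.trans ht0M
        _ ≤ M * (1 - Stmt2Aux.fseq P B k t0) := key k t0 ht0D
    have hMz : M ≤ 0 := by nlinarith
    have hds : d s = 0 := abs_eq_zero.mp (le_antisymm (le_trans (hMle s hsD) hMz) (abs_nonneg _))
    exact sub_eq_zero.mp hds
  refine ⟨⟨Stmt2Aux.fsup P B, hsol⟩, huniq, ?_⟩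
  intro x hx s hs
  rw [huniq x (Stmt2Aux.fsup P B) hx hsol s hs, Stmt2Aux.hitProb_eq_fsup hnn hrow]
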